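/- arXiv:2010.00707 — 2 statements merged into one kernel-verified Lean document; each statement's English description precedes it below -/
import Mathlib

section
/- For every real number λ with λ > 1, one has (10/7)·(λ²−λ+1)·F(8/3, 1/3, 10/3; 1/λ) − (1/6)·(λ+1)·(8λ²−11λ+8)·F(5/3, 1/3, 7/3; 1/λ) + λ·(1−λ)²·F(2/3, 1/3, 4/3; 1/λ) = −(1/3)·(λ−1)^{1/3}·λ^{5/3}·(λ+1). -/
open scoped BigOperators

/-- The Gauss hypergeometric series `F(a,b,c;z)`. -/
noncomputable def hypF (a b c z : ℝ) : ℝ :=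
  ∑' n : ℕ,
    (Polynomial.eval a (ascPochhammer ℝ n) * Polynomial.eval b (ascPochhammer ℝ n) /
      (Polynomial.eval c (ascPochhammer ℝ n) * (n.factorial : ℝ))) * z ^ n

/-! ### Auxiliary: the binomial coefficients `(2/3)_n / n!` -/

noncomputable def bco (n : ℕ) : ℝ := (ascPochhammer ℝ n).eval (2/3) / n.factorial

lemma bco_def' (n : ℕ) : bco n = (ascPochhammer ℝ n).eval (2/3) / n.factorial := rfl

lemma bco_zero : bco 0 = 1 := by simp [bco]

lemma bco_pos (n : ℕ) : 0 < bco n := by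
  apply div_pos (ascPochhammer_pos n _ (by norm_num))
  exact_mod_cast Nat.factorial_pos n

lemma bco_succ (n : ℕ) : bco (n+1) = bco n * (3*(n:ℝ)+2) / (3*(n:ℝ)+3) := by
  have h : ((n+1).factorial : ℝ) = (n.factorial : ℝ) * ((n:ℝ)+1) := by
    push_cast [Nat.factorial_succ]; ring
  have hf : (n.factorial : ℝ) ≠ 0 := by exact_mod_cast Nat.factorial_ne_zero n
  rw [bco, ascPochhammer_succ_eval, h, bco]
  field_simp
  ring

lemma bco_le_one (n : ℕ) : bco n ≤ 1 := by
  induction n with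
  | zero => simp [bco_zero]
  | succ n ih =>
    rw [bco_succ]
    have h1 : (0:ℝ) < 3*(n:ℝ)+3 := by positivity
    rw [div_le_one h1]
    nlinarith [bco_pos n]

lemma summable_coef {z : ℝ} (hz0 : 0 ≤ z) (hz1 : z < 1) {c : ℕ → ℝ} {K : ℝ}
    (hc : ∀ n, |c n| ≤ K) : Summable (fun n => c n * z ^ n) := by
  apply Summable.of_norm_bounded (g := fun n => K * z ^ n)
    ((summable_geometric_of_lt_one hz0 hz1).mul_left K)
  intro n
  rw [norm_mul, norm_pow, Real.norm_eq_abs, Real.norm_eq_abs, abs_of_nonneg hz0]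
  exact mul_le_mul_of_nonneg_right (hc n) (by positivity)

/-! ### The binomial series for `(1-z)^(-2/3)` -/

lemma summable_bco {x : ℝ} (hx : |x| < 1) : Summable (fun n => bco n * x ^ n) := by
  apply Summable.of_norm_bounded (g := fun n => |x| ^ n)
    (summable_geometric_of_lt_one (abs_nonneg x) hx)
  intro n
  rw [Real.norm_eq_abs, abs_mul, abs_pow]
  have h1 : |bco n| ≤ 1 := by rw [abs_of_pos (bco_pos n)]; exact bco_le_one n
  calc |bco n| * |x| ^ n ≤ 1 * |x| ^ n :=
        mul_le_mul_of_nonneg_right h1 (by positivity)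
    _ = |x| ^ n := one_mul _

lemma summable_deriv_bco {r : ℝ} (hr0 : 0 < r) (hr1 : r < 1) :
    Summable (fun n : ℕ => (n:ℝ) * r ^ n / r) := by
  have := summable_pow_mul_geometric_of_norm_lt_one (R := ℝ) 1 (r := r)
    (by rw [Real.norm_eq_abs, abs_of_pos hr0]; exact hr1)
  simpa [div_eq_mul_inv] using this.mul_right r⁻¹

lemma deriv_bound {x r : ℝ} (hr0 : 0 < r) (hxr : |x| < r) (n : ℕ) :
    ‖bco n * ((n:ℝ) * x ^ (n-1))‖ ≤ (n:ℝ) * r ^ n / r := by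
  cases n with
  | zero => simp
  | succ m =>
    have h1 : |x| ^ m ≤ r ^ m := pow_le_pow_left₀ (abs_nonneg x) hxr.le m
    have h2 : ((m:ℝ)+1) * r ^ (m + 1) / r = ((m:ℝ)+1) * r ^ m := by
      rw [pow_succ]; field_simp
    rw [Real.norm_eq_abs, abs_mul, abs_mul, Nat.add_sub_cancel, abs_pow,
      abs_of_pos (bco_pos _), abs_of_nonneg (by positivity : (0:ℝ) ≤ ((m+1:ℕ):ℝ))]
    push_cast
    rw [h2]
    have h3 : bco (m+1) * (((m:ℝ) + 1) * |x| ^ m) ≤ 1 * (((m:ℝ) + 1) * r ^ m) :=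
      mul_le_mul (bco_le_one _)
        (mul_le_mul_of_nonneg_left h1 (by positivity)) (by positivity) (by norm_num)
    linarith

lemma hasSum_bco {z : ℝ} (h0 : 0 < z) (h1 : z < 1) :
    HasSum (fun n => bco n * z ^ n) (((1 - z) ^ ((2:ℝ)/3))⁻¹) := by
  set g : ℝ → ℝ := fun x => ∑' n, bco n * x ^ n with hg
  have key : ∀ x ∈ Set.Ioo (-1:ℝ) 1,
      HasDerivAt g (∑' n : ℕ, bco n * ((n:ℝ) * x ^ (n-1))) x := by
    intro x hx
    have hxabs : |x| < 1 := abs_lt.2 ⟨by linarith [hx.1], hx.2⟩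
    set r : ℝ := (|x| + 1) / 2 with hrdef
    have hr0 : 0 < r := by positivity
    have hr1 : r < 1 := by rw [hrdef]; linarith
    have hxr : |x| < r := by rw [hrdef]; linarith
    exact hasDerivAt_tsum_of_isPreconnected (summable_deriv_bco hr0 hr1)
      (isOpen_Ioo (a := -r) (b := r)) (convex_Ioo _ _).isPreconnected
      (fun n y _ => ((hasDerivAt_pow n y).const_mul (bco n)))
      (fun n y hy => deriv_bound hr0 (abs_lt.2 ⟨by linarith [hy.1], hy.2⟩) n)
      (Set.mem_Ioo.2 ⟨by linarith, hr0⟩)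
      (summable_bco (by norm_num))
      (Set.mem_Ioo.2 ⟨neg_lt_of_abs_lt hxr, lt_of_abs_lt hxr⟩)
  have ode : ∀ x ∈ Set.Ioo (-1:ℝ) 1,
      HasDerivAt g (2/3 * g x / (1 - x)) x := by
    intro x hx
    have hxabs : |x| < 1 := abs_lt.2 ⟨by linarith [hx.1], hx.2⟩
    have h1x : (0:ℝ) < 1 - x := by linarith [hx.2]
    set D : ℝ := ∑' n : ℕ, bco n * ((n:ℝ) * x ^ (n-1)) with hD
    have hsD : Summable (fun n : ℕ => bco n * ((n:ℝ) * x ^ (n-1))) := by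
      set r : ℝ := (|x| + 1) / 2 with hrdef
      have hr0 : 0 < r := by positivity
      have hr1 : r < 1 := by rw [hrdef]; linarith
      have hxr : |x| < r := by rw [hrdef]; linarith
      exact Summable.of_norm_bounded (summable_deriv_bco hr0 hr1)
        (fun n => deriv_bound hr0 hxr n)
    have hDsum : HasSum (fun n : ℕ => bco n * ((n:ℝ) * x ^ (n-1))) D := hsD.hasSum
    have hshift : HasSum (fun n : ℕ => bco (n+1) * (((n:ℝ)+1) * x ^ n)) D := by
      have h := (hasSum_nat_add_iff
        (f := fun n : ℕ => bco n * ((n:ℝ) * x ^ (n-1))) 1).2 (by simpa using hDsum)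
      have e : (fun n : ℕ => bco (n+1) * (((n+1:ℕ):ℝ) * x ^ ((n+1) - 1)))
          = fun n : ℕ => bco (n+1) * (((n:ℝ)+1) * x ^ n) := by
        funext n; push_cast [Nat.add_sub_cancel]; ring
      rwa [e] at h
    have hxD : HasSum (fun n : ℕ => bco n * ((n:ℝ) * x ^ n)) (x * D) := by
      have h := hDsum.mul_left x
      have e : (fun n : ℕ => x * (bco n * ((n:ℝ) * x ^ (n-1))))
          = fun n : ℕ => bco n * ((n:ℝ) * x ^ n) := by
        funext n
        cases n with
        | zero => simp
        | succ m => rw [Nat.add_sub_cancel]; push_cast; ring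
      rwa [e] at h
    have hgx : HasSum (fun n : ℕ => bco n * x ^ n) (g x) := (summable_bco hxabs).hasSum
    have hcomb : HasSum (fun n : ℕ => bco (n+1) * (((n:ℝ)+1) * x ^ n))
        (2/3 * g x + x * D) := by
      have h := (hgx.mul_left (2/3)).add hxD
      have e : (fun n : ℕ => 2/3 * (bco n * x ^ n) + bco n * ((n:ℝ) * x ^ n))
          = fun n : ℕ => bco (n+1) * (((n:ℝ)+1) * x ^ n) := by
        funext n
        rw [bco_succ n]
        have hd : (3*(n:ℝ)+3) ≠ 0 := by positivity
        field_simp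
        ring
      rwa [e] at h
    have hDeq : D = 2/3 * g x + x * D := hshift.unique hcomb
    have hDval : D = 2/3 * g x / (1 - x) := by
      field_simp
      linarith [hDeq]
    exact hDval ▸ key x hx
  set p : ℝ → ℝ := fun x => g x * (1 - x) ^ ((2:ℝ)/3) with hp
  have hderiv : ∀ x ∈ Set.Ioo (-1:ℝ) 1, HasDerivAt p 0 x := by
    intro x hx
    have h1x : (0:ℝ) < 1 - x := by linarith [hx.2]
    have hrpow : HasDerivAt (fun y : ℝ => (1 - y) ^ ((2:ℝ)/3))
        ((2:ℝ)/3 * (1 - x) ^ ((2:ℝ)/3 - 1) * (-1)) x := by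
      have hbase : HasDerivAt (fun y : ℝ => 1 - y) (-1) x := by
        simpa using (hasDerivAt_id x).const_sub 1
      exact (Real.hasDerivAt_rpow_const (p := (2:ℝ)/3) (Or.inl h1x.ne')).comp x hbase
    have hprod := (ode x hx).mul hrpow
    have heq : 2/3 * g x / (1 - x) * (1 - x) ^ ((2:ℝ)/3)
        + g x * ((2:ℝ)/3 * (1 - x) ^ ((2:ℝ)/3 - 1) * (-1)) = 0 := by
      have e : (1 - x) ^ ((2:ℝ)/3 - 1) = (1 - x) ^ ((2:ℝ)/3) / (1 - x) := by
        rw [Real.rpow_sub h1x, Real.rpow_one]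
      rw [e]
      field_simp
      ring
    rwa [heq] at hprod
  have hpz : p z = p 0 := by
    have hsub : Set.Icc (0:ℝ) z ⊆ Set.Ioo (-1:ℝ) 1 := by
      intro y hy
      exact Set.mem_Ioo.2 ⟨by linarith [hy.1], by linarith [hy.2]⟩
    have hcont : ContinuousOn p (Set.Icc 0 z) := by
      intro y hy
      exact (hderiv y (hsub hy)).continuousAt.continuousWithinAt
    obtain ⟨c, hc, hceq⟩ := exists_hasDerivAt_eq_slope p (fun _ => (0:ℝ)) h0 hcont
      (fun y hy => hderiv y (hsub ⟨hy.1.le, hy.2.le⟩))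
    have heq : (p z - p 0) / (z - 0) = 0 := hceq.symm
    have hz' : z - 0 ≠ 0 := by simpa using h0.ne'
    field_simp at heq
    linarith [heq]
  have hp0 : p 0 = 1 := by
    have hg0 : g 0 = 1 := by
      have e : g 0 = ∑' n : ℕ, bco n * (0:ℝ) ^ n := rfl
      rw [e, tsum_eq_single 0 (fun n hn => by simp [zero_pow hn])]
      simp [bco_zero]
    have e : p 0 = g 0 * (1 - 0 : ℝ) ^ ((2:ℝ)/3) := rfl
    rw [e, hg0]
    norm_num
  have hfin : g z * (1 - z) ^ ((2:ℝ)/3) = 1 := by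
    rw [show g z * (1 - z) ^ ((2:ℝ)/3) = p z from rfl, hpz, hp0]
  have hpow : (0:ℝ) < (1 - z) ^ ((2:ℝ)/3) := Real.rpow_pos_of_pos (by linarith) _
  have hne : (1 - z) ^ ((2:ℝ)/3) ≠ 0 := hpow.ne'
  have hgz : g z = ((1 - z) ^ ((2:ℝ)/3))⁻¹ := by
    field_simp
    linarith [hfin]
  have h2 : HasSum (fun n => bco n * z ^ n) (g z) :=
    (summable_bco (by rw [abs_of_pos h0]; exact h1)).hasSum
  rwa [hgz] at h2

/-! ### Pochhammer evaluations -/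

lemma poch_shift (a : ℝ) (n : ℕ) :
    (ascPochhammer ℝ n).eval (a+1) * a = (ascPochhammer ℝ n).eval a * (a + n) := by
  induction n with
  | zero => simp
  | succ n ih =>
    rw [ascPochhammer_succ_eval, ascPochhammer_succ_eval]
    push_cast
    linear_combination (a + 1 + (n:ℝ)) * ih

lemma e43 (n : ℕ) : (ascPochhammer ℝ n).eval (4/3)
    = (ascPochhammer ℝ n).eval (1/3) * (3*(n:ℝ)+1) := by
  have h := poch_shift (1/3) n
  norm_num at h
  linarith [h]

lemma e73 (n : ℕ) : (ascPochhammer ℝ n).eval (7/3)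
    = (ascPochhammer ℝ n).eval (1/3) * ((3*(n:ℝ)+1) * (3*(n:ℝ)+4)) / 4 := by
  have h := poch_shift (4/3) n
  norm_num at h
  rw [e43] at h
  linarith [h]

lemma e103 (n : ℕ) : (ascPochhammer ℝ n).eval (10/3)
    = (ascPochhammer ℝ n).eval (1/3) * ((3*(n:ℝ)+1) * (3*(n:ℝ)+4) * (3*(n:ℝ)+7)) / 28 := by
  have h := poch_shift (7/3) n
  norm_num at h
  rw [e73] at h
  linarith [h]

lemma poch23 (n : ℕ) : (ascPochhammer ℝ n).eval (2/3) = bco n * n.factorial := by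
  rw [bco_def']
  have : (n.factorial : ℝ) ≠ 0 := by exact_mod_cast Nat.factorial_ne_zero n
  field_simp

lemma e53 (n : ℕ) : (ascPochhammer ℝ n).eval (5/3)
    = 3/2 * (bco (n+1) * (n+1).factorial) := by
  have h := poch_shift (2/3) n
  norm_num at h
  have h2 : (ascPochhammer ℝ n).eval (2/3) * (2/3 + (n:ℝ)) = bco (n+1) * (n+1).factorial := by
    rw [← ascPochhammer_succ_eval, poch23]
  rw [h2] at h
  linarith [h]

lemma e83 (n : ℕ) : (ascPochhammer ℝ n).eval (8/3)
    = 9/10 * (bco (n+2) * (n+2).factorial) := by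
  have h := poch_shift (5/3) n
  norm_num at h
  have h2 : (ascPochhammer ℝ n).eval (5/3) * (5/3 + (n:ℝ))
      = 3/2 * (bco (n+2) * (n+2).factorial) := by
    rw [← ascPochhammer_succ_eval, e53]
  rw [h2] at h
  linarith [h]

lemma p13_ne (n : ℕ) : (ascPochhammer ℝ n).eval (1/3) ≠ 0 :=
  (ascPochhammer_pos n _ (by norm_num)).ne'

lemma fact_ne (n : ℕ) : ((n.factorial : ℝ)) ≠ 0 := by
  exact_mod_cast Nat.factorial_ne_zero n

lemma coef1 (n : ℕ) :
    (ascPochhammer ℝ n).eval (2/3) * (ascPochhammer ℝ n).eval (1/3) /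
      ((ascPochhammer ℝ n).eval (4/3) * (n.factorial : ℝ))
    = bco n / (3*(n:ℝ)+1) := by
  rw [e43, poch23]
  have h1 := p13_ne n
  have h2 := fact_ne n
  have h3 : (3*(n:ℝ)+1) ≠ 0 := by positivity
  field_simp

lemma coef2 (n : ℕ) :
    (ascPochhammer ℝ n).eval (5/3) * (ascPochhammer ℝ n).eval (1/3) /
      ((ascPochhammer ℝ n).eval (7/3) * (n.factorial : ℝ))
    = 6*((n:ℝ)+1) * bco (n+1) / ((3*(n:ℝ)+1) * (3*(n:ℝ)+4)) := by
  rw [e73, e53]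
  have h1 := p13_ne n
  have h2 := fact_ne n
  have h3 : (3*(n:ℝ)+1) ≠ 0 := by positivity
  have h4 : (3*(n:ℝ)+4) ≠ 0 := by positivity
  have h5 : ((n+1).factorial : ℝ) = ((n:ℝ)+1) * n.factorial := by
    push_cast [Nat.factorial_succ]; ring
  rw [h5]
  field_simp
  ring

lemma coef3 (n : ℕ) :
    (ascPochhammer ℝ n).eval (8/3) * (ascPochhammer ℝ n).eval (1/3) /
      ((ascPochhammer ℝ n).eval (10/3) * (n.factorial : ℝ))
    = 126/5*(((n:ℝ)+1) * ((n:ℝ)+2)) * bco (n+2) /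
        ((3*(n:ℝ)+1) * (3*(n:ℝ)+4) * (3*(n:ℝ)+7)) := by
  rw [e103, e83]
  have h1 := p13_ne n
  have h2 := fact_ne n
  have h3 : (3*(n:ℝ)+1) ≠ 0 := by positivity
  have h4 : (3*(n:ℝ)+4) ≠ 0 := by positivity
  have h6 : (3*(n:ℝ)+7) ≠ 0 := by positivity
  have h5 : ((n+2).factorial : ℝ) = ((n:ℝ)+2) * (((n:ℝ)+1) * n.factorial) := by
    have e : n + 2 = (n + 1) + 1 := rfl
    rw [e, Nat.factorial_succ, Nat.factorial_succ]
    push_cast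
    ring

  rw [h5]
  field_simp
  ring

/-! ### Shifted series -/

noncomputable def sh (k : ℕ) (f : ℕ → ℝ) : ℕ → ℝ := fun m => if k ≤ m then f (m - k) else 0

lemma hasSum_sh {f : ℕ → ℝ} {a : ℝ} (k : ℕ) (h : HasSum f a) : HasSum (sh k f) a := by
  have h1 : (fun n => sh k f (n + k)) = f := by
    funext n
    simp [sh, Nat.le_add_left]
  have h2 : ∑ i ∈ Finset.range k, sh k f i = 0 :=
    Finset.sum_eq_zero fun i hi => by
      have hik := Finset.mem_range.1 hi
      simp only [sh]
      rw [if_neg (by omega)]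
  have h3 := (hasSum_nat_add_iff (f := sh k f) k).1 (by rw [h1]; exact h)
  rwa [h2, add_zero] at h3

/-! ### The series occurring in the identity -/

noncomputable def q1 (z : ℝ) (n : ℕ) : ℝ := bco n / (3*(n:ℝ)+1) * z ^ n
noncomputable def q2 (z : ℝ) (n : ℕ) : ℝ :=
  6*((n:ℝ)+1) * bco (n+1) / ((3*(n:ℝ)+1) * (3*(n:ℝ)+4)) * z ^ n
noncomputable def q3 (z : ℝ) (n : ℕ) : ℝ :=
  126/5*(((n:ℝ)+1) * ((n:ℝ)+2)) * bco (n+2) /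
    ((3*(n:ℝ)+1) * (3*(n:ℝ)+4) * (3*(n:ℝ)+7)) * z ^ n
noncomputable def qS (z : ℝ) (n : ℕ) : ℝ := bco n * z ^ n

lemma summable_q1 {z : ℝ} (hz0 : 0 ≤ z) (hz1 : z < 1) : Summable (q1 z) := by
  apply summable_coef hz0 hz1 (K := 1)
  intro n
  have hb := bco_pos n
  have hb1 := bco_le_one n
  have hd : (0:ℝ) < 3*(n:ℝ)+1 := by positivity
  rw [abs_of_pos (by positivity)]
  rw [div_le_one hd]
  nlinarith [Nat.cast_nonneg (α := ℝ) n]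

lemma summable_q2 {z : ℝ} (hz0 : 0 ≤ z) (hz1 : z < 1) : Summable (q2 z) := by
  apply summable_coef hz0 hz1 (K := 2)
  intro n
  have hb := bco_pos (n+1)
  have hb1 := bco_le_one (n+1)
  have hn : (0:ℝ) ≤ n := Nat.cast_nonneg n
  have hd : (0:ℝ) < (3*(n:ℝ)+1) * (3*(n:ℝ)+4) := by positivity
  rw [abs_of_pos (by positivity), div_le_iff₀ hd]
  nlinarith

lemma summable_q3 {z : ℝ} (hz0 : 0 ≤ z) (hz1 : z < 1) : Summable (q3 z) := by
  apply summable_coef hz0 hz1 (K := 26)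
  intro n
  have hb := bco_pos (n+2)
  have hb1 := bco_le_one (n+2)
  have hn : (0:ℝ) ≤ n := Nat.cast_nonneg n
  have hd : (0:ℝ) < (3*(n:ℝ)+1) * (3*(n:ℝ)+4) * (3*(n:ℝ)+7) := by positivity
  rw [abs_of_pos (by positivity), div_le_iff₀ hd]
  have key : 126/5*(((n:ℝ)+1) * ((n:ℝ)+2)) * bco (n+2)
      ≤ 126/5*(((n:ℝ)+1) * ((n:ℝ)+2)) := by nlinarith
  nlinarith [key]

lemma hypF_eq_q1 {z : ℝ} : hypF (2/3) (1/3) (4/3) z = ∑' n, q1 z n := by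
  unfold hypF q1
  exact tsum_congr fun n => by rw [coef1]

lemma hypF_eq_q2 {z : ℝ} : hypF (5/3) (1/3) (7/3) z = ∑' n, q2 z n := by
  unfold hypF q2
  exact tsum_congr fun n => by rw [coef2]

lemma hypF_eq_q3 {z : ℝ} : hypF (8/3) (1/3) (10/3) z = ∑' n, q3 z n := by
  unfold hypF q3
  exact tsum_congr fun n => by rw [coef3]

/-! ### The key pointwise identity -/

lemma bco_one : bco 1 = 2/3 := by
  have h := bco_succ 0
  rw [bco_zero] at h
  norm_num at h
  exact h

lemma bco_two : bco 2 = 5/9 := by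
  have h := bco_succ 1
  rw [bco_one] at h
  norm_num at h
  exact h

lemma bco_three : bco 3 = 40/81 := by
  have h := bco_succ 2
  rw [bco_two] at h
  norm_num at h
  exact h

set_option maxHeartbeats 2000000 in
lemma bigzero (z : ℝ) (m : ℕ) :
    10/7 * (z * sh 1 (q3 z) m) - 10/7 * (z^2 * sh 2 (q3 z) m)
      + 10/7 * (z^3 * sh 3 (q3 z) m)
    - 4/3 * q2 z m + 1/2 * (z * sh 1 (q2 z) m) + 1/2 * (z^2 * sh 2 (q2 z) m)
    - 4/3 * (z^3 * sh 3 (q2 z) m)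
    + q1 z m - 2 * (z * sh 1 (q1 z) m) + z^2 * sh 2 (q1 z) m
    + 1/3 * qS z m - 1/3 * (z^2 * sh 2 (qS z) m) = 0 := by
  match m with
  | 0 =>
    simp only [sh, q1, q2, q3, qS]
    norm_num [bco_zero, bco_one]
  | 1 =>
    simp only [sh, q1, q2, q3, qS]
    norm_num [bco_zero, bco_one, bco_two, bco_three]
    ring
  | 2 =>
    simp only [sh, q1, q2, q3, qS]
    norm_num [bco_zero, bco_one, bco_two, bco_three]
    ring
  | (k+3) =>
    have s1 : ∀ f : ℕ → ℝ, sh 1 f (k+3) = f (k+2) := fun f => by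
      simp only [sh]
      rw [if_pos (by omega)]
      congr 1
    have s2 : ∀ f : ℕ → ℝ, sh 2 f (k+3) = f (k+1) := fun f => by
      simp only [sh]
      rw [if_pos (by omega)]
      congr 1
    have s3 : ∀ f : ℕ → ℝ, sh 3 f (k+3) = f k := fun f => by
      simp only [sh]
      rw [if_pos (by omega)]
      congr 1
    rw [s1, s2, s3, s1, s2, s3, s1, s2, s2]
    simp only [q1, q2, q3, qS]
    -- normalize bco indices
    have i1 : k+2+2 = k+4 := by omega
    have i2 : k+3+1 = k+4 := by omega
    have i3 : k+1+2 = k+3 := by omega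
    have i4 : k+2+1 = k+3 := by omega
    have i5 : k+1+1 = k+2 := by omega
    rw [i1, i2, i3, i4, i5]
    have b4 : bco (k+4) = bco (k+3) * (3*((k:ℝ)+3)+2) / (3*((k:ℝ)+3)+3) := by
      have h := bco_succ (k+3)
      push_cast at h
      rw [(by omega : k+3+1 = k+4)] at h
      exact h
    have b3 : bco (k+3) = bco (k+2) * (3*((k:ℝ)+2)+2) / (3*((k:ℝ)+2)+3) := by
      have h := bco_succ (k+2)
      push_cast at h
      rw [(by omega : k+2+1 = k+3)] at h
      exact h
    have b2 : bco (k+2) = bco (k+1) * (3*((k:ℝ)+1)+2) / (3*((k:ℝ)+1)+3) := by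
      have h := bco_succ (k+1)
      push_cast at h
      rw [(by omega : k+1+1 = k+2)] at h
      exact h
    rw [b4, b3, b2]
    push_cast
    have hk : (0:ℝ) ≤ (k:ℝ) := Nat.cast_nonneg k
    have d1 : (3*(k:ℝ)+1) ≠ 0 := by positivity
    have d2 : (3*(k:ℝ)+4) ≠ 0 := by positivity
    have d3 : (3*(k:ℝ)+7) ≠ 0 := by positivity
    have d4 : (3*(k:ℝ)+10) ≠ 0 := by positivity
    have d5 : (3*(k:ℝ)+13) ≠ 0 := by positivity
    have d6 : (3*(k:ℝ)+6) ≠ 0 := by positivity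
    have d7 : (3*(k:ℝ)+9) ≠ 0 := by positivity
    have d8 : (3*(k:ℝ)+12) ≠ 0 := by positivity
    have e1 : (3*((k:ℝ)+1)+1) = 3*(k:ℝ)+4 := by ring
    have e2 : (3*((k:ℝ)+1)+4) = 3*(k:ℝ)+7 := by ring
    have e3 : (3*((k:ℝ)+1)+7) = 3*(k:ℝ)+10 := by ring
    have e4 : (3*((k:ℝ)+2)+1) = 3*(k:ℝ)+7 := by ring
    have e5 : (3*((k:ℝ)+2)+4) = 3*(k:ℝ)+10 := by ring
    have e6 : (3*((k:ℝ)+2)+7) = 3*(k:ℝ)+13 := by ring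
    have e7 : (3*((k:ℝ)+3)+1) = 3*(k:ℝ)+10 := by ring
    have e8 : (3*((k:ℝ)+3)+4) = 3*(k:ℝ)+13 := by ring
    have e9 : (3*((k:ℝ)+1)+2) = 3*(k:ℝ)+5 := by ring
    have e10 : (3*((k:ℝ)+1)+3) = 3*(k:ℝ)+6 := by ring
    have e11 : (3*((k:ℝ)+2)+2) = 3*(k:ℝ)+8 := by ring
    have e12 : (3*((k:ℝ)+2)+3) = 3*(k:ℝ)+9 := by ring
    have e13 : (3*((k:ℝ)+3)+2) = 3*(k:ℝ)+11 := by ring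
    have e14 : (3*((k:ℝ)+3)+3) = 3*(k:ℝ)+12 := by ring
    rw [e1, e2, e3, e4, e5, e6, e7, e8, e9, e10, e11, e12, e13, e14]
    field_simp
    ring

set_option maxHeartbeats 1000000 in
theorem stmt17 (l : ℝ) (h1 : 1 < l) :
    (10 / 7) * (l ^ 2 - l + 1) * hypF (8 / 3) (1 / 3) (10 / 3) (1 / l)
      - (1 / 6) * (l + 1) * (8 * l ^ 2 - 11 * l + 8) * hypF (5 / 3) (1 / 3) (7 / 3) (1 / l)
      + l * (1 - l) ^ 2 * hypF (2 / 3) (1 / 3) (4 / 3) (1 / l)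
      = -(1 / 3) * (l - 1) ^ ((1 : ℝ) / 3) * l ^ ((5 : ℝ) / 3) * (l + 1) := by
  have hl0 : (0:ℝ) < l := by linarith
  set z : ℝ := 1 / l with hzdef
  have hz0 : 0 < z := by rw [hzdef]; positivity
  have hz1 : z < 1 := by rw [hzdef, div_lt_one hl0]; linarith
  set Sv : ℝ := ((1 - z) ^ ((2:ℝ)/3))⁻¹ with hSv
  set A1 : ℝ := hypF (2/3) (1/3) (4/3) z with hA1
  set A2 : ℝ := hypF (5/3) (1/3) (7/3) z with hA2
  set A3 : ℝ := hypF (8/3) (1/3) (10/3) z with hA3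
  have hq1 : HasSum (q1 z) A1 := by
    rw [hA1, hypF_eq_q1]; exact (summable_q1 hz0.le hz1).hasSum
  have hq2 : HasSum (q2 z) A2 := by
    rw [hA2, hypF_eq_q2]; exact (summable_q2 hz0.le hz1).hasSum
  have hq3 : HasSum (q3 z) A3 := by
    rw [hA3, hypF_eq_q3]; exact (summable_q3 hz0.le hz1).hasSum
  have hqS : HasSum (qS z) Sv := hasSum_bco hz0 hz1
  have t01 := ((hasSum_sh 1 hq3).mul_left z).mul_left (10/7)
  have t02 := ((hasSum_sh 2 hq3).mul_left (z^2)).mul_left (10/7)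
  have t03 := ((hasSum_sh 3 hq3).mul_left (z^3)).mul_left (10/7)
  have t04 := hq2.mul_left (4/3)
  have t05 := ((hasSum_sh 1 hq2).mul_left z).mul_left (1/2)
  have t06 := ((hasSum_sh 2 hq2).mul_left (z^2)).mul_left (1/2)
  have t07 := ((hasSum_sh 3 hq2).mul_left (z^3)).mul_left (4/3)
  have t08 := hq1
  have t09 := ((hasSum_sh 1 hq1).mul_left z).mul_left 2
  have t10 := (hasSum_sh 2 hq1).mul_left (z^2)
  have t11 := hqS.mul_left (1/3)
  have t12 := ((hasSum_sh 2 hqS).mul_left (z^2)).mul_left (1/3)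
  have htot := (((((((((((t01.sub t02).add t03).sub t04).add t05).add t06).sub
    t07).add t08).sub t09).add t10).add t11).sub t12)
  have hzero : HasSum (fun m : ℕ =>
      10/7 * (z * sh 1 (q3 z) m) - 10/7 * (z^2 * sh 2 (q3 z) m)
        + 10/7 * (z^3 * sh 3 (q3 z) m)
      - 4/3 * q2 z m + 1/2 * (z * sh 1 (q2 z) m) + 1/2 * (z^2 * sh 2 (q2 z) m)
      - 4/3 * (z^3 * sh 3 (q2 z) m)
      + q1 z m - 2 * (z * sh 1 (q1 z) m) + z^2 * sh 2 (q1 z) m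
      + 1/3 * qS z m - 1/3 * (z^2 * sh 2 (qS z) m)) 0 := by
    have e : (fun m : ℕ =>
        10/7 * (z * sh 1 (q3 z) m) - 10/7 * (z^2 * sh 2 (q3 z) m)
          + 10/7 * (z^3 * sh 3 (q3 z) m)
        - 4/3 * q2 z m + 1/2 * (z * sh 1 (q2 z) m) + 1/2 * (z^2 * sh 2 (q2 z) m)
        - 4/3 * (z^3 * sh 3 (q2 z) m)
        + q1 z m - 2 * (z * sh 1 (q1 z) m) + z^2 * sh 2 (q1 z) m
        + 1/3 * qS z m - 1/3 * (z^2 * sh 2 (qS z) m)) = fun _ => (0:ℝ) :=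
      funext fun m => bigzero z m
    rw [e]
    exact hasSum_zero
  have hT : 10/7 * (z * A3) - 10/7 * (z^2 * A3) + 10/7 * (z^3 * A3)
      - 4/3 * A2 + 1/2 * (z * A2) + 1/2 * (z^2 * A2) - 4/3 * (z^3 * A2)
      + A1 - 2 * (z * A1) + z^2 * A1
      + 1/3 * Sv - 1/3 * (z^2 * Sv) = 0 := htot.unique hzero
  -- algebraic identities relating powers of l and z
  have hlne : l ≠ 0 := hl0.ne'
  have c1 : (l^2 - l + 1) * z^3 = z - z^2 + z^3 := by
    rw [hzdef]; field_simp
  have c2 : (l+1)*(8*l^2-11*l+8) * z^3 = 8 - 3*z - 3*z^2 + 8*z^3 := by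
    rw [hzdef]; field_simp; ring
  have c3 : l*(1-l)^2 * z^3 = 1 - 2*z + z^2 := by
    rw [hzdef]; field_simp; ring
  have c4 : z^3 * l^2 * (l+1) = 1 + z := by
    rw [hzdef]; field_simp
  have h1z : (0:ℝ) < 1 - z := by linarith
  have e1 : l - 1 = l * (1 - z) := by
    rw [hzdef]; field_simp
  have e2 : (l-1) ^ ((1:ℝ)/3) = l ^ ((1:ℝ)/3) * (1-z) ^ ((1:ℝ)/3) := by
    rw [e1, Real.mul_rpow hl0.le h1z.le]
  have e3 : l ^ ((1:ℝ)/3) * l ^ ((5:ℝ)/3) = l ^ 2 := by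
    rw [← Real.rpow_add hl0,
      show ((1:ℝ)/3 + 5/3) = ((2:ℕ):ℝ) by norm_num, Real.rpow_natCast]
  have e4 : (1-z) ^ ((1:ℝ)/3) = (1-z) * Sv := by
    rw [hSv, show ((1:ℝ)/3) = 1 - (2:ℝ)/3 by norm_num, Real.rpow_sub h1z,
      Real.rpow_one, div_eq_mul_inv]
  have e5 : (l-1) ^ ((1:ℝ)/3) * l ^ ((5:ℝ)/3) = l^2 * ((1-z) * Sv) := by
    rw [e2]
    linear_combination ((1-z) ^ ((1:ℝ)/3)) * e3 + (l^2) * e4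
  have hz3 : z^3 ≠ 0 := by positivity
  apply mul_left_cancel₀ hz3
  linear_combination (10/7*A3) * c1 - (1/6*A2) * c2 + A1 * c3 + hT
    + ((1/3)*(l+1)*z^3) * e5 + ((1/3)*(1-z)*Sv) * c4
end

section
/- For every real number λ with λ > 1, one has (24/7)·(λ²−λ+1)·F(11/3, 1/3, 13/3; 1/λ) − (10/21)·(λ+1)·(7λ²−10λ+7)·F(8/3, 1/3, 10/3; 1/λ) + 2·λ·(1−λ)²·F(5/3, 1/3, 7/3; 1/λ) = −(4/3)·(λ−1)^{1/3}·λ^{8/3}. -/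
open scoped BigOperators

namespace Stmt18Aux

noncomputable def P (a : ℝ) (n : ℕ) : ℝ := (ascPochhammer ℝ n).eval a

lemma P_zero (a : ℝ) : P a 0 = 1 := by simp [P]

lemma P_succ (a : ℝ) (n : ℕ) : P a (n + 1) = P a n * (a + n) :=
  ascPochhammer_succ_eval n a

lemma P_pos {a : ℝ} (ha : 0 < a) (n : ℕ) : 0 < P a n := ascPochhammer_pos n a ha

lemma P_le {a b : ℝ} (ha : 0 < a) (hab : a ≤ b) (n : ℕ) : P a n ≤ P b n := by
  induction n with
  | zero => simp [P_zero]
  | succ n ih =>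
    rw [P_succ, P_succ]
    have h1 := P_pos ha n
    have h2 : (0:ℝ) ≤ a + n := by positivity
    have h3 : a + (n:ℝ) ≤ b + n := by linarith
    nlinarith

lemma P_one_eval (n : ℕ) : P 1 n = n.factorial := by
  induction n with
  | zero => simp [P_zero]
  | succ n ih =>
    rw [P_succ, ih, Nat.factorial_succ]
    push_cast; ring

lemma P_third_le (n : ℕ) : P (1/3) n ≤ n.factorial := by
  calc P (1/3) n ≤ P 1 n := P_le (by norm_num) (by norm_num) n
  _ = n.factorial := P_one_eval n

/-- abs bound on `(-1/3)_n`. -/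
lemma P_neg_third_abs (n : ℕ) : |P (-1/3) n| ≤ n.factorial := by
  induction n with
  | zero => simp [P_zero]
  | succ n ih =>
    rw [P_succ, abs_mul, Nat.factorial_succ]
    have h1 : |(-1/3 : ℝ) + n| ≤ (n:ℝ) + 1 := by
      rw [abs_le]
      constructor <;> linarith [Nat.cast_nonneg (α := ℝ) n]
    have h2 : (0:ℝ) ≤ |P (-1/3) n| := abs_nonneg _
    push_cast
    nlinarith

end Stmt18Aux

section Binomial

open Stmt18Aux Set

/-- coefficient of the binomial series for `(1-x)^(1/3)`. -/
noncomputable def dd (n : ℕ) : ℝ := P (-1/3) n / n.factorial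

lemma dd_zero : dd 0 = 1 := by simp [dd, P_zero]

lemma dd_abs (n : ℕ) : |dd n| ≤ 1 := by
  rw [dd, abs_div, abs_of_nonneg (by positivity : (0:ℝ) ≤ (n.factorial : ℝ))]
  rw [div_le_one (by positivity)]
  exact P_neg_third_abs n

lemma dd_rec (n : ℕ) : ((n:ℝ) + 1) * dd (n + 1) = ((n:ℝ) - 1/3) * dd n := by
  have hf : ((n.factorial : ℝ)) ≠ 0 := by positivity
  rw [dd, dd, P_succ, Nat.factorial_succ]
  push_cast
  field_simp
  ring

lemma summable_dd {x : ℝ} (hx : |x| < 1) : Summable (fun n : ℕ => dd n * x ^ n) := by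
  apply Summable.of_norm_bounded (g := fun n => |x| ^ n)
    (summable_geometric_of_lt_one (abs_nonneg x) hx)
  intro n
  rw [Real.norm_eq_abs, abs_mul, abs_pow]
  nlinarith [dd_abs n, pow_nonneg (abs_nonneg x) n, abs_nonneg (dd n)]

lemma summable_ndd {x : ℝ} (hx : |x| < 1) :
    Summable (fun n : ℕ => (((n:ℝ) + 1) * dd (n + 1)) * x ^ n) := by
  have hgeom : Summable (fun n : ℕ => ((n:ℝ) + 1) * |x| ^ n) := by
    have h1 : Summable (fun n : ℕ => (n:ℝ) ^ 1 * |x| ^ n) :=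
      summable_pow_mul_geometric_of_norm_lt_one 1 (by rwa [Real.norm_eq_abs, abs_abs])
    have h2 : Summable (fun n : ℕ => |x| ^ n) :=
      summable_geometric_of_lt_one (abs_nonneg x) hx
    simpa [add_mul, one_mul] using h1.add h2
  apply Summable.of_norm_bounded hgeom
  intro n
  rw [Real.norm_eq_abs, abs_mul, abs_mul, abs_pow,
    abs_of_pos (by positivity : (0:ℝ) < (n:ℝ) + 1)]
  calc ((n:ℝ) + 1) * |dd (n + 1)| * |x| ^ n ≤ ((n:ℝ) + 1) * 1 * |x| ^ n := by
        gcongr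
        exact dd_abs (n + 1)
  _ = ((n:ℝ) + 1) * |x| ^ n := by ring

noncomputable def gg (x : ℝ) : ℝ := ∑' n : ℕ, dd n * x ^ n

noncomputable def gg' (x : ℝ) : ℝ := ∑' n : ℕ, (((n:ℝ) + 1) * dd (n + 1)) * x ^ n

lemma hasSum_gg' {x : ℝ} (hx : |x| < 1) :
    HasSum (fun n : ℕ => dd n * ((n:ℝ) * x ^ (n - 1))) (gg' x) := by
  have hs : HasSum (fun n : ℕ => (((n:ℝ) + 1) * dd (n + 1)) * x ^ n) (gg' x) :=
    (summable_ndd hx).hasSum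
  have hiff : HasSum (fun n : ℕ => dd (n+1) * (((n+1 : ℕ):ℝ) * x ^ ((n+1) - 1)))
      (gg' x - ∑ i ∈ Finset.range 1, dd i * ((i:ℝ) * x ^ (i - 1))) ↔
      HasSum (fun n : ℕ => dd n * ((n:ℝ) * x ^ (n - 1))) (gg' x) :=
    hasSum_nat_add_iff' 1
  apply hiff.mp
  rw [show (∑ i ∈ Finset.range 1, dd i * ((i:ℝ) * x ^ (i - 1))) = 0 by simp, sub_zero]
  convert hs using 1
  funext n
  simp only [Nat.add_sub_cancel]
  push_cast
  ring

lemma hasDerivAt_gg {x : ℝ} (hx : |x| < 1) : HasDerivAt gg (gg' x) x := by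
  set r : ℝ := (1 + |x|) / 2 with hr
  have hxr : |x| < r := by rw [hr]; linarith
  have hr1 : r < 1 := by rw [hr]; linarith
  have hr0 : 0 ≤ r := le_trans (abs_nonneg x) hxr.le
  have hu : Summable (fun n : ℕ => (n:ℝ) * r ^ (n - 1)) := by
    rw [← summable_nat_add_iff 1]
    have h1 : Summable (fun n : ℕ => (n:ℝ) ^ 1 * r ^ n) :=
      summable_pow_mul_geometric_of_norm_lt_one 1
        (by rw [Real.norm_eq_abs, abs_of_nonneg hr0]; exact hr1)
    have h2 : Summable (fun n : ℕ => r ^ n) := summable_geometric_of_lt_one hr0 hr1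
    simpa [add_mul, one_mul, Nat.add_sub_cancel] using h1.add h2
  have hmem : x ∈ Ioo (-r) r := Set.mem_Ioo.mpr (abs_lt.mp hxr)
  have key : HasDerivAt (fun y => ∑' n : ℕ, dd n * y ^ n)
      (∑' n : ℕ, dd n * ((n:ℝ) * x ^ (n - 1))) x := by
    apply hasDerivAt_tsum_of_isPreconnected hu (isOpen_Ioo (a := -r) (b := r))
      (convex_Ioo _ _).isPreconnected
      (g := fun n y => dd n * y ^ n) (g' := fun n y => dd n * ((n:ℝ) * y ^ (n - 1)))
      (y₀ := x)
    · intro n y _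
      exact (hasDerivAt_pow n y).const_mul (dd n)
    · intro n y hy
      rw [Real.norm_eq_abs, abs_mul, abs_mul, abs_pow,
        abs_of_nonneg (Nat.cast_nonneg (α := ℝ) n)]
      have h1 : |y| ≤ r := le_of_lt (abs_lt.mpr ⟨hy.1, hy.2⟩)
      have h2 : |y| ^ (n - 1) ≤ r ^ (n - 1) := pow_le_pow_left₀ (abs_nonneg y) h1 _
      calc |dd n| * ((n:ℝ) * |y| ^ (n - 1)) ≤ 1 * ((n:ℝ) * r ^ (n - 1)) := by
            gcongr <;> first | exact dd_abs n | exact h1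
      _ = (n:ℝ) * r ^ (n - 1) := by ring
    · exact hmem
    · exact summable_dd hx
    · exact hmem
  have heq : (∑' n : ℕ, dd n * ((n:ℝ) * x ^ (n - 1))) = gg' x := (hasSum_gg' hx).tsum_eq
  rw [heq] at key
  exact key

lemma gg_ode {x : ℝ} (hx : |x| < 1) : (1 - x) * gg' x = -(1/3) * gg x := by
  have hs : HasSum (fun n : ℕ => (((n:ℝ) + 1) * dd (n + 1)) * x ^ n) (gg' x) :=
    (summable_ndd hx).hasSum
  have hs1 : HasSum (fun n : ℕ => (((n:ℝ) - 1/3) * dd n) * x ^ n) (gg' x) := by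
    convert hs using 1
    funext n
    rw [dd_rec]
  have hs2 : HasSum (fun n : ℕ => ((n:ℝ) * dd n) * x ^ n) (x * gg' x) := by
    have h := hs.mul_left x
    have hiff : HasSum (fun n : ℕ => (((n+1:ℕ):ℝ) * dd (n+1)) * x ^ (n+1))
        (x * gg' x - ∑ i ∈ Finset.range 1, ((i:ℝ) * dd i) * x ^ i) ↔
        HasSum (fun n : ℕ => ((n:ℝ) * dd n) * x ^ n) (x * gg' x) :=
      hasSum_nat_add_iff' 1
    apply hiff.mp
    rw [show (∑ i ∈ Finset.range 1, ((i:ℝ) * dd i) * x ^ i) = 0 by simp, sub_zero]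
    convert h using 1
    · rfl
    funext n
    push_cast
    ring
  have hg : HasSum (fun n : ℕ => dd n * x ^ n) (gg x) := (summable_dd hx).hasSum
  have hsub : HasSum (fun n : ℕ => (-(1/3)) * (dd n * x ^ n)) (gg' x - x * gg' x) := by
    convert hs1.sub hs2 using 1
    · rfl
    funext n
    ring
  have huniq := hsub.unique (hg.mul_left (-(1/3)))
  linarith [huniq]

lemma gg_zero : gg 0 = 1 := by
  rw [gg, tsum_eq_single 0 (by intro n hn; simp [zero_pow hn])]
  simp [dd_zero]

lemma hasSum_binomial {x : ℝ} (h0 : 0 < x) (h1 : x < 1) :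
    HasSum (fun n : ℕ => dd n * x ^ n) ((1 - x) ^ ((1:ℝ)/3)) := by
  have hderiv : ∀ y ∈ Icc (0:ℝ) x,
      HasDerivAt (fun y => gg y * (1 - y) ^ (-(1:ℝ)/3)) 0 y := by
    intro y hy
    have hy1 : |y| < 1 := by
      rw [abs_lt]; exact ⟨by linarith [hy.1], by linarith [hy.2]⟩
    have hy2 : (0:ℝ) < 1 - y := by linarith [hy.2]
    have hg := hasDerivAt_gg hy1
    have hb : HasDerivAt (fun y : ℝ => 1 - y) (-1) y := by
      simpa using (hasDerivAt_id y).const_sub 1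
    have hr := hb.rpow_const (p := -(1:ℝ)/3) (Or.inl (ne_of_gt hy2))
    have hprod := hg.mul hr
    convert hprod using 1
    · rfl
    · rfl
    · rfl
    have hode := gg_ode hy1
    have hsplit : (1 - y) * (1 - y) ^ ((-(1:ℝ)/3) - 1) = (1 - y) ^ (-(1:ℝ)/3) := by
      nth_rw 1 [← Real.rpow_one (1 - y)]
      rw [← Real.rpow_add hy2]
      norm_num
    rw [← hsplit]
    linear_combination (-(1:ℝ) * (1 - y) ^ ((-(1:ℝ)/3) - 1)) * hode
  have hcont : ContinuousOn (fun y => gg y * (1 - y) ^ (-(1:ℝ)/3)) (Icc 0 x) := fun y hy =>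
    ((hderiv y hy).continuousAt).continuousWithinAt
  obtain ⟨c, hc, hc0⟩ := exists_hasDerivAt_eq_slope (fun y => gg y * (1 - y) ^ (-(1:ℝ)/3))
    (fun _ => (0:ℝ)) h0 hcont (fun y hy => hderiv y ⟨hy.1.le, hy.2.le⟩)
  have hfx : gg x * (1 - x) ^ (-(1:ℝ)/3) = gg 0 * (1 - 0) ^ (-(1:ℝ)/3) := by
    have h := hc0.symm
    rw [div_eq_iff (by linarith : x - (0:ℝ) ≠ 0)] at h
    have := h
    linarith [this]
  have hgx : gg x * (1 - x) ^ (-(1:ℝ)/3) = 1 := by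
    rw [hfx, gg_zero]
    norm_num
  have hx1 : (0:ℝ) < 1 - x := by linarith
  have hrw : gg x = (1 - x) ^ ((1:ℝ)/3) := by
    have h2 : (1 - x) ^ (-(1:ℝ)/3) * (1 - x) ^ ((1:ℝ)/3) = 1 := by
      rw [← Real.rpow_add hx1]
      norm_num
    calc gg x = gg x * ((1 - x) ^ (-(1:ℝ)/3) * (1 - x) ^ ((1:ℝ)/3)) := by rw [h2]; ring
    _ = (gg x * (1 - x) ^ (-(1:ℝ)/3)) * (1 - x) ^ ((1:ℝ)/3) := by ring
    _ = (1 - x) ^ ((1:ℝ)/3) := by rw [hgx]; ring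
  have hsum := (summable_dd (x := x) (by rw [abs_of_pos h0]; exact h1)).hasSum
  rwa [show (∑' n : ℕ, dd n * x ^ n) = gg x from rfl, hrw] at hsum

end Binomial

section Coeffs

open Stmt18Aux

noncomputable def co (a c : ℝ) (n : ℕ) : ℝ :=
  P a n * P (1/3) n / (P c n * n.factorial)

lemma hypF_eq (a b c z : ℝ) : hypF a b c z = ∑' n : ℕ, (P a n * P b n / (P c n * n.factorial)) * z ^ n := rfl

lemma co_nonneg {a c : ℝ} (ha : 0 < a) (hc : 0 < c) (n : ℕ) : 0 ≤ co a c n := by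
  have h1 := P_pos ha n
  have h2 := P_pos (show (0:ℝ) < 1/3 by norm_num) n
  have h3 := P_pos hc n
  have h4 : (0:ℝ) < n.factorial := by positivity
  rw [co]; positivity

lemma co_le_one {a c : ℝ} (ha : 0 < a) (hac : a ≤ c) (n : ℕ) : co a c n ≤ 1 := by
  have hc : 0 < c := lt_of_lt_of_le ha hac
  have h1 := P_pos ha n
  have h3 := P_pos hc n
  have h4 : (0:ℝ) < n.factorial := by positivity
  rw [co, div_le_one (by positivity)]
  have h5 := P_le ha hac n
  have h6 := P_third_le n
  have h7 := P_pos (show (0:ℝ) < 1/3 by norm_num) n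
  nlinarith

lemma summable_co {a c : ℝ} (ha : 0 < a) (hac : a ≤ c) {z : ℝ} (hz : |z| < 1) :
    Summable (fun n : ℕ => co a c n * z ^ n) := by
  apply Summable.of_norm_bounded (g := fun n => |z| ^ n)
    (summable_geometric_of_lt_one (abs_nonneg z) hz)
  intro n
  rw [Real.norm_eq_abs, abs_mul, abs_pow,
    abs_of_nonneg (co_nonneg ha (lt_of_lt_of_le ha hac) n)]
  calc co a c n * |z| ^ n ≤ 1 * |z| ^ n := by
        gcongr
        exact co_le_one ha hac n
  _ = |z| ^ n := one_mul _

lemma hasSum_hypF {a c : ℝ} (ha : 0 < a) (hac : a ≤ c) {z : ℝ} (hz : |z| < 1) :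
    HasSum (fun n : ℕ => co a c n * z ^ n) (hypF a (1/3) c z) :=
  (summable_co ha hac hz).hasSum

lemma hasSum_shift {f : ℕ → ℝ} {S z : ℝ} (k : ℕ)
    (h : HasSum (fun n : ℕ => f n * z ^ n) S) :
    HasSum (fun n : ℕ => if k ≤ n then f (n - k) * z ^ n else 0) (z ^ k * S) := by
  have h2 := h.mul_left (z ^ k)
  have hiff : HasSum (fun n : ℕ => if k ≤ n + k then f (n + k - k) * z ^ (n + k) else 0)
      (z ^ k * S - ∑ i ∈ Finset.range k, (if k ≤ i then f (i - k) * z ^ i else 0)) ↔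
      HasSum (fun n : ℕ => if k ≤ n then f (n - k) * z ^ n else 0) (z ^ k * S) :=
    hasSum_nat_add_iff' k
  apply hiff.mp
  rw [Finset.sum_eq_zero (fun i hi => by
    rw [if_neg (by exact fun hki => absurd (Finset.mem_range.mp hi) (not_lt.mpr hki))]),
    sub_zero]
  convert h2 using 1
  · rfl
  funext n
  rw [if_pos (Nat.le_add_left k n), Nat.add_sub_cancel, pow_add]
  ring

lemma L5 (m : ℕ) : 2 * P (5/3) m = (1 - 3*(m:ℝ)) * (2 + 3*(m:ℝ)) * P (-1/3) m := by
  induction m with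
  | zero => norm_num [P_zero]
  | succ n ih =>
    rw [P_succ, P_succ]
    push_cast
    linear_combination ((5:ℝ)/3 + n) * ih

lemma L7 (m : ℕ) : 4 * P (7/3) m = (1 + 3*(m:ℝ)) * (4 + 3*(m:ℝ)) * P (1/3) m := by
  induction m with
  | zero => norm_num [P_zero]
  | succ n ih =>
    rw [P_succ, P_succ]
    push_cast
    linear_combination ((7:ℝ)/3 + n) * ih

lemma L8 (m : ℕ) : 10 * P (8/3) m
    = (1 - 3*(m:ℝ)) * (2 + 3*(m:ℝ)) * (5 + 3*(m:ℝ)) * P (-1/3) m := by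
  induction m with
  | zero => norm_num [P_zero]
  | succ n ih =>
    rw [P_succ, P_succ]
    push_cast
    linear_combination ((8:ℝ)/3 + n) * ih

lemma L10 (m : ℕ) : 28 * P (10/3) m
    = (1 + 3*(m:ℝ)) * (4 + 3*(m:ℝ)) * (7 + 3*(m:ℝ)) * P (1/3) m := by
  induction m with
  | zero => norm_num [P_zero]
  | succ n ih =>
    rw [P_succ, P_succ]
    push_cast
    linear_combination ((10:ℝ)/3 + n) * ih

lemma L11 (m : ℕ) : 80 * P (11/3) m
    = (1 - 3*(m:ℝ)) * (2 + 3*(m:ℝ)) * (5 + 3*(m:ℝ)) * (8 + 3*(m:ℝ)) * P (-1/3) m := by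
  induction m with
  | zero => norm_num [P_zero]
  | succ n ih =>
    rw [P_succ, P_succ]
    push_cast
    linear_combination ((11:ℝ)/3 + n) * ih

lemma L13 (m : ℕ) : 280 * P (13/3) m
    = (1 + 3*(m:ℝ)) * (4 + 3*(m:ℝ)) * (7 + 3*(m:ℝ)) * (10 + 3*(m:ℝ)) * P (1/3) m := by
  induction m with
  | zero => norm_num [P_zero]
  | succ n ih =>
    rw [P_succ, P_succ]
    push_cast
    linear_combination ((13:ℝ)/3 + n) * ih

lemma co_A (m : ℕ) : co (11/3) (13/3) m
    = (7*(1 - 3*(m:ℝ))*(2 + 3*(m:ℝ))*(5 + 3*(m:ℝ))*(8 + 3*(m:ℝ)))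
      / (2*(1 + 3*(m:ℝ))*(4 + 3*(m:ℝ))*(7 + 3*(m:ℝ))*(10 + 3*(m:ℝ))) * dd m := by
  have e11 : P (11/3) m
      = (1 - 3*(m:ℝ)) * (2 + 3*(m:ℝ)) * (5 + 3*(m:ℝ)) * (8 + 3*(m:ℝ)) * P (-1/3) m / 80 := by
    linear_combination (L11 m) / 80
  have e13 : P (13/3) m
      = (1 + 3*(m:ℝ)) * (4 + 3*(m:ℝ)) * (7 + 3*(m:ℝ)) * (10 + 3*(m:ℝ)) * P (1/3) m / 280 := by
    linear_combination (L13 m) / 280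
  have hm : (0:ℝ) ≤ (m:ℝ) := Nat.cast_nonneg m
  have hx1 : P (1/3) m ≠ 0 := (P_pos (by norm_num) m).ne'
  have hf : ((m.factorial : ℝ)) ≠ 0 := by positivity
  have k1 : (1 + 3*(m:ℝ)) ≠ 0 := by positivity
  have k2 : (4 + 3*(m:ℝ)) ≠ 0 := by positivity
  have k3 : (7 + 3*(m:ℝ)) ≠ 0 := by positivity
  have k4 : (10 + 3*(m:ℝ)) ≠ 0 := by positivity
  rw [co, dd, e11, e13]
  field_simp
  ring

lemma co_B (m : ℕ) : co (8/3) (10/3) m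
    = (14*(1 - 3*(m:ℝ))*(2 + 3*(m:ℝ))*(5 + 3*(m:ℝ)))
      / (5*(1 + 3*(m:ℝ))*(4 + 3*(m:ℝ))*(7 + 3*(m:ℝ))) * dd m := by
  have e8 : P (8/3) m
      = (1 - 3*(m:ℝ)) * (2 + 3*(m:ℝ)) * (5 + 3*(m:ℝ)) * P (-1/3) m / 10 := by
    linear_combination (L8 m) / 10
  have e10 : P (10/3) m
      = (1 + 3*(m:ℝ)) * (4 + 3*(m:ℝ)) * (7 + 3*(m:ℝ)) * P (1/3) m / 28 := by
    linear_combination (L10 m) / 28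
  have hm : (0:ℝ) ≤ (m:ℝ) := Nat.cast_nonneg m
  have hx1 : P (1/3) m ≠ 0 := (P_pos (by norm_num) m).ne'
  have hf : ((m.factorial : ℝ)) ≠ 0 := by positivity
  have k1 : (1 + 3*(m:ℝ)) ≠ 0 := by positivity
  have k2 : (4 + 3*(m:ℝ)) ≠ 0 := by positivity
  have k3 : (7 + 3*(m:ℝ)) ≠ 0 := by positivity
  rw [co, dd, e8, e10]
  field_simp
  ring

lemma co_C (m : ℕ) : co (5/3) (7/3) m
    = (2*(1 - 3*(m:ℝ))*(2 + 3*(m:ℝ))) / ((1 + 3*(m:ℝ))*(4 + 3*(m:ℝ))) * dd m := by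
  have e5 : P (5/3) m = (1 - 3*(m:ℝ)) * (2 + 3*(m:ℝ)) * P (-1/3) m / 2 := by
    linear_combination (L5 m) / 2
  have e7 : P (7/3) m = (1 + 3*(m:ℝ)) * (4 + 3*(m:ℝ)) * P (1/3) m / 4 := by
    linear_combination (L7 m) / 4
  have hm : (0:ℝ) ≤ (m:ℝ) := Nat.cast_nonneg m
  have hx1 : P (1/3) m ≠ 0 := (P_pos (by norm_num) m).ne'
  have hf : ((m.factorial : ℝ)) ≠ 0 := by positivity
  have k1 : (1 + 3*(m:ℝ)) ≠ 0 := by positivity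
  have k2 : (4 + 3*(m:ℝ)) ≠ 0 := by positivity
  rw [co, dd, e5, e7]
  field_simp
  ring

end Coeffs

section BigIdentity

open Stmt18Aux

lemma dd_one : dd 1 = -(1/3) := by
  have h := dd_rec 0
  norm_num [dd_zero] at h
  linarith

lemma dd_two : dd 2 = -(1/9) := by
  have h := dd_rec 1
  rw [dd_one] at h
  norm_num at h
  linarith

set_option maxHeartbeats 3200000 in
lemma coeffs (m : ℕ) :
    (24/7) * (co (11/3) (13/3) (m+2) - co (11/3) (13/3) (m+1) + co (11/3) (13/3) m)
      - (10/21) * (7 * co (8/3) (10/3) (m+3) - 3 * co (8/3) (10/3) (m+2)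
          - 3 * co (8/3) (10/3) (m+1) + 7 * co (8/3) (10/3) m)
      + 2 * co (5/3) (7/3) (m+3) - 4 * co (5/3) (7/3) (m+2) + 2 * co (5/3) (7/3) (m+1)
      = -(4/3) * dd (m+3) := by
  set μ : ℝ := (m : ℝ) with hμ
  have hm : (0:ℝ) ≤ μ := Nat.cast_nonneg m
  have hn1 : (μ + 1) ≠ 0 := by positivity
  have hn2 : (μ + 2) ≠ 0 := by positivity
  have hn3 : (μ + 3) ≠ 0 := by positivity
  have h1 := dd_rec m
  have h2 := dd_rec (m+1)
  have h3 := dd_rec (m+2)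
  push_cast at h1 h2 h3
  have ed1 : dd (m+1) = (μ - 1/3) / (μ + 1) * dd m := by
    rw [div_mul_eq_mul_div, eq_div_iff hn1]
    linear_combination h1
  have ed2 : dd (m+2) = (μ - 1/3) * (μ + 2/3) / ((μ + 1) * (μ + 2)) * dd m := by
    rw [show m + 2 = m + 1 + 1 from rfl]
    rw [ed1] at h2
    rw [div_mul_eq_mul_div, eq_div_iff (by positivity : ((μ+1)*(μ+2) : ℝ) ≠ 0)]
    field_simp at h2
    linear_combination (1/9 : ℝ) * h2
  have ed3 : dd (m+3) = (μ - 1/3) * (μ + 2/3) * (μ + 5/3)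
      / ((μ + 1) * (μ + 2) * (μ + 3)) * dd m := by
    rw [show m + 3 = m + 2 + 1 from rfl]
    rw [ed2] at h3
    rw [div_mul_eq_mul_div, eq_div_iff (by positivity : ((μ+1)*(μ+2)*(μ+3) : ℝ) ≠ 0)]
    field_simp at h3
    linear_combination (1/27 : ℝ) * h3
  rw [co_A (m+2), co_A (m+1), co_A m, co_B (m+3), co_B (m+2), co_B (m+1), co_B m,
    co_C (m+3), co_C (m+2), co_C (m+1), ed3, ed2, ed1]
  push_cast
  have k10 : (1 + 3*μ) ≠ 0 := by positivity
  have k20 : (4 + 3*μ) ≠ 0 := by positivity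
  have k30 : (7 + 3*μ) ≠ 0 := by positivity
  have k40 : (10 + 3*μ) ≠ 0 := by positivity
  have k11 : (1 + 3*(μ+1)) ≠ 0 := by positivity
  have k21 : (4 + 3*(μ+1)) ≠ 0 := by positivity
  have k31 : (7 + 3*(μ+1)) ≠ 0 := by positivity
  have k41 : (10 + 3*(μ+1)) ≠ 0 := by positivity
  have k12 : (1 + 3*(μ+2)) ≠ 0 := by positivity
  have k22 : (4 + 3*(μ+2)) ≠ 0 := by positivity
  have k32 : (7 + 3*(μ+2)) ≠ 0 := by positivity
  have k42 : (10 + 3*(μ+2)) ≠ 0 := by positivity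
  have k13 : (1 + 3*(μ+3)) ≠ 0 := by positivity
  have k23 : (4 + 3*(μ+3)) ≠ 0 := by positivity
  have k33 : (7 + 3*(μ+3)) ≠ 0 := by positivity
  have k43 : (10 + 3*(μ+3)) ≠ 0 := by positivity
  field_simp
  ring

end BigIdentity

section Final

open Stmt18Aux

lemma P_one (a : ℝ) : P a 1 = a := by
  rw [show (1:ℕ) = 0+1 from rfl, P_succ, P_zero]
  norm_num

lemma P_two (a : ℝ) : P a 2 = a * (a + 1) := by
  rw [show (2:ℕ) = 1+1 from rfl, P_succ, P_one]
  norm_num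

lemma term_id (z : ℝ) (n : ℕ) :
    (24/7) * ((if 1 ≤ n then co (11/3) (13/3) (n-1) * z^n else 0)
        - (if 2 ≤ n then co (11/3) (13/3) (n-2) * z^n else 0)
        + (if 3 ≤ n then co (11/3) (13/3) (n-3) * z^n else 0))
    - (10/21) * (7 * (co (8/3) (10/3) n * z^n)
        - 3 * (if 1 ≤ n then co (8/3) (10/3) (n-1) * z^n else 0)
        - 3 * (if 2 ≤ n then co (8/3) (10/3) (n-2) * z^n else 0)
        + 7 * (if 3 ≤ n then co (8/3) (10/3) (n-3) * z^n else 0))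
    + (2 * (co (5/3) (7/3) n * z^n)
        - 4 * (if 1 ≤ n then co (5/3) (7/3) (n-1) * z^n else 0)
        + 2 * (if 2 ≤ n then co (5/3) (7/3) (n-2) * z^n else 0))
    = -(4/3) * (dd n * z^n) := by
  match n with
  | 0 => norm_num [co, P_zero, dd_zero]
  | 1 => norm_num [co, P_zero, P_one, dd_one]; ring
  | 2 => norm_num [co, P_zero, P_one, P_two, dd_two]; ring
  | (m+3) =>
    have t1 : (1:ℕ) ≤ m+3 := by omega
    have t2 : (2:ℕ) ≤ m+3 := by omega
    have t3 : (3:ℕ) ≤ m+3 := by omega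
    simp only [if_pos t1, if_pos t2, if_pos t3,
      show m+3-1 = m+2 from rfl, show m+3-2 = m+1 from rfl, show m+3-3 = m from rfl]
    linear_combination (z^(m+3)) * coeffs m

lemma key {z : ℝ} (h0 : 0 < z) (h1 : z < 1) :
    (24/7) * (z * (1 - z + z^2)) * hypF (11/3) (1/3) (13/3) z
      - (10/21) * (7 - 3*z - 3*z^2 + 7*z^3) * hypF (8/3) (1/3) (10/3) z
      + 2 * (1 - z)^2 * hypF (5/3) (1/3) (7/3) z
      = -(4/3) * (1 - z) ^ ((1:ℝ)/3) := by
  have hz : |z| < 1 := by rw [abs_of_pos h0]; exact h1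
  have hA : HasSum (fun n : ℕ => co (11/3) (13/3) n * z^n) (hypF (11/3) (1/3) (13/3) z) :=
    hasSum_hypF (by norm_num) (by norm_num) hz
  have hB : HasSum (fun n : ℕ => co (8/3) (10/3) n * z^n) (hypF (8/3) (1/3) (10/3) z) :=
    hasSum_hypF (by norm_num) (by norm_num) hz
  have hC : HasSum (fun n : ℕ => co (5/3) (7/3) n * z^n) (hypF (5/3) (1/3) (7/3) z) :=
    hasSum_hypF (by norm_num) (by norm_num) hz
  have H0 : HasSum (fun n : ℕ =>
      (24/7) * ((if 1 ≤ n then co (11/3) (13/3) (n-1) * z^n else 0)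
          - (if 2 ≤ n then co (11/3) (13/3) (n-2) * z^n else 0)
          + (if 3 ≤ n then co (11/3) (13/3) (n-3) * z^n else 0))
      - (10/21) * (7 * (co (8/3) (10/3) n * z^n)
          - 3 * (if 1 ≤ n then co (8/3) (10/3) (n-1) * z^n else 0)
          - 3 * (if 2 ≤ n then co (8/3) (10/3) (n-2) * z^n else 0)
          + 7 * (if 3 ≤ n then co (8/3) (10/3) (n-3) * z^n else 0))
      + (2 * (co (5/3) (7/3) n * z^n)
          - 4 * (if 1 ≤ n then co (5/3) (7/3) (n-1) * z^n else 0)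
          + 2 * (if 2 ≤ n then co (5/3) (7/3) (n-2) * z^n else 0)))
      ((24/7) * (z^1 * hypF (11/3) (1/3) (13/3) z - z^2 * hypF (11/3) (1/3) (13/3) z
          + z^3 * hypF (11/3) (1/3) (13/3) z)
      - (10/21) * (7 * hypF (8/3) (1/3) (10/3) z - 3 * (z^1 * hypF (8/3) (1/3) (10/3) z)
          - 3 * (z^2 * hypF (8/3) (1/3) (10/3) z) + 7 * (z^3 * hypF (8/3) (1/3) (10/3) z))
      + (2 * hypF (5/3) (1/3) (7/3) z - 4 * (z^1 * hypF (5/3) (1/3) (7/3) z)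
          + 2 * (z^2 * hypF (5/3) (1/3) (7/3) z))) := by
    exact ((((((hasSum_shift 1 hA).sub (hasSum_shift 2 hA)).add
        (hasSum_shift 3 hA)).mul_left (24/7)).sub
      (((((hB.mul_left 7).sub ((hasSum_shift 1 hB).mul_left 3)).sub
        ((hasSum_shift 2 hB).mul_left 3)).add
        ((hasSum_shift 3 hB).mul_left 7)).mul_left (10/21))).add
      (((hC.mul_left 2).sub ((hasSum_shift 1 hC).mul_left 4)).add
        ((hasSum_shift 2 hC).mul_left 2)))
  rw [show (fun n : ℕ =>
      (24/7) * ((if 1 ≤ n then co (11/3) (13/3) (n-1) * z^n else 0)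
          - (if 2 ≤ n then co (11/3) (13/3) (n-2) * z^n else 0)
          + (if 3 ≤ n then co (11/3) (13/3) (n-3) * z^n else 0))
      - (10/21) * (7 * (co (8/3) (10/3) n * z^n)
          - 3 * (if 1 ≤ n then co (8/3) (10/3) (n-1) * z^n else 0)
          - 3 * (if 2 ≤ n then co (8/3) (10/3) (n-2) * z^n else 0)
          + 7 * (if 3 ≤ n then co (8/3) (10/3) (n-3) * z^n else 0))
      + (2 * (co (5/3) (7/3) n * z^n)
          - 4 * (if 1 ≤ n then co (5/3) (7/3) (n-1) * z^n else 0)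
          + 2 * (if 2 ≤ n then co (5/3) (7/3) (n-2) * z^n else 0)))
      = (fun n : ℕ => -(4/3) * (dd n * z^n)) from funext (term_id z)] at H0
  have H2 : HasSum (fun n : ℕ => -(4/3) * (dd n * z^n)) (-(4/3) * ((1 - z) ^ ((1:ℝ)/3))) :=
    (hasSum_binomial h0 h1).mul_left (-(4/3))
  have hS := H0.unique H2
  linear_combination hS

end Final


theorem stmt18 (l : ℝ) (h1 : 1 < l) :
    (24 / 7) * (l ^ 2 - l + 1) * hypF (11 / 3) (1 / 3) (13 / 3) (1 / l)
      - (10 / 21) * (l + 1) * (7 * l ^ 2 - 10 * l + 7) * hypF (8 / 3) (1 / 3) (10 / 3) (1 / l)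
      + 2 * l * (1 - l) ^ 2 * hypF (5 / 3) (1 / 3) (7 / 3) (1 / l)
      = -(4 / 3) * (l - 1) ^ ((1 : ℝ) / 3) * l ^ ((8 : ℝ) / 3) := by
  have hl0 : (0:ℝ) < l := by linarith
  have h0 : (0:ℝ) < 1/l := by positivity
  have h1' : 1/l < 1 := by rw [div_lt_one hl0]; exact h1
  have K := key h0 h1'
  have hll : (0:ℝ) < 1 - 1/l := by linarith
  have hR : (l - 1) ^ ((1:ℝ)/3) * l ^ ((8:ℝ)/3) = (1 - 1/l) ^ ((1:ℝ)/3) * l^3 := by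
    have h2 : l - 1 = (1 - 1/l) * l := by field_simp
    rw [h2, Real.mul_rpow hll.le hl0.le, mul_assoc, ← Real.rpow_add hl0,
      show (1:ℝ)/3 + (8:ℝ)/3 = ((3:ℕ):ℝ) by norm_num, Real.rpow_natCast]
  have e1 : (24/7) * (l^2 - l + 1)
      = l^3 * ((24/7) * ((1/l) * (1 - 1/l + (1/l)^2))) := by
    field_simp
  have e2 : (10/21) * (l + 1) * (7*l^2 - 10*l + 7)
      = l^3 * ((10/21) * (7 - 3*(1/l) - 3*(1/l)^2 + 7*(1/l)^3)) := by
    field_simp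
    ring
  have e3 : 2 * l * (1 - l)^2 = l^3 * (2 * (1 - 1/l)^2) := by
    field_simp
    ring
  linear_combination hypF (11/3) (1/3) (13/3) (1/l) * e1
    - hypF (8/3) (1/3) (10/3) (1/l) * e2
    + hypF (5/3) (1/3) (7/3) (1/l) * e3
    + l^3 * K + (4/3) * hR
end
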